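/- Suppose a nonnegative integer-valued random variable X with mean μ > 0 admits a coupling with its size-bias transform X^s that is (c,q)-bounded for the lower tail: P(X^s ≤ X + c | X) ≥ q almost surely. Then P(X = 0) ≤ exp(−q μ / c). -/

import Mathlib

open Filter

lemma stmt16_exp_le (a : ℝ) (ha : 0 ≤ a) : Real.exp (a - a^2) ≤ 1 + a := by
  have h1 : (0:ℝ) < 1 + a := by linarith
  rw [← Real.exp_log h1]
  apply Real.exp_le_exp.mpr
  have h2 : Real.log (1+a)⁻¹ ≤ (1+a)⁻¹ - 1 := Real.log_le_sub_one_of_pos (by positivity)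
  rw [Real.log_inv] at h2
  have h3 : 1 - (1+a)⁻¹ ≤ Real.log (1+a) := by linarith
  have h4 : a - a^2 ≤ 1 - (1+a)⁻¹ := by
    have h5 : (1+a)⁻¹ * (1+a) = 1 := inv_mul_cancel₀ (ne_of_gt h1)
    nlinarith [sq_nonneg a, mul_pos h1 h1]
  linarith

lemma stmt16_prod_ge (K c h : ℝ) (hK : 0 ≤ K) (hc : 0 < c) (hh : 0 < h) (N : ℕ) :
    Real.exp ((K/c) * Real.exp (-(h*c)) * (1 - Real.exp (-((N:ℝ)*h*c))) - h*K^2/(2*c))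
      ≤ ∏ j ∈ Finset.range N, (1 + h*K*Real.exp (-(((j:ℝ)+1) * h * c))) := by
  set a : ℕ → ℝ := fun j => h*K*Real.exp (-(((j:ℝ)+1) * h * c)) with ha
  have hanneg : ∀ j, 0 ≤ a j := fun j => by positivity
  have step1 : Real.exp (∑ j ∈ Finset.range N, (a j - (a j)^2))
      ≤ ∏ j ∈ Finset.range N, (1 + a j) := by
    rw [Real.exp_sum]
    exact Finset.prod_le_prod (fun j _ => (Real.exp_pos _).le)
      (fun j _ => stmt16_exp_le (a j) (hanneg j))
  refine le_trans (Real.exp_le_exp.mpr ?_) step1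
  rw [Finset.sum_sub_distrib]
  have hsum1 : (K/c) * Real.exp (-(h*c)) * (1 - Real.exp (-((N:ℝ)*h*c)))
      ≤ ∑ j ∈ Finset.range N, a j := by
    have tele : ∑ j ∈ Finset.range N, (Real.exp (-((j:ℝ)*h*c)) - Real.exp (-(((j:ℝ)+1)*h*c)))
        = 1 - Real.exp (-((N:ℝ)*h*c)) := by
      have := Finset.sum_range_sub' (fun j => Real.exp (-((j:ℝ)*h*c))) N
      simpa using this
    rw [← tele, Finset.mul_sum]
    apply Finset.sum_le_sum
    intro j _
    have e1 : Real.exp (-((j:ℝ)*h*c)) - Real.exp (-(((j:ℝ)+1)*h*c))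
        = Real.exp (-(((j:ℝ)+1)*h*c)) * (Real.exp (h*c) - 1) := by
      rw [mul_sub, ← Real.exp_add]; ring_nf
    have hep := Real.exp_pos (h*c)
    have e2 : Real.exp (h*c) - 1 ≤ h*c*Real.exp (h*c) := by
      have h1 : 1 - Real.exp (-(h*c)) ≤ h*c := by linarith [Real.add_one_le_exp (-(h*c))]
      have h2 := mul_le_mul_of_nonneg_right h1 hep.le
      have hv : Real.exp (-(h*c)) * Real.exp (h*c) = 1 := by rw [← Real.exp_add]; simp
      nlinarith [h2, hv]
    rw [e1]
    have hfact : Real.exp (-(h*c)) * Real.exp (h*c) = 1 := by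
      rw [← Real.exp_add]; simp
    have hp := Real.exp_pos (-(((j:ℝ)+1)*h*c))
    calc K/c * Real.exp (-(h*c)) * (Real.exp (-(((j:ℝ)+1)*h*c)) * (Real.exp (h*c) - 1))
        ≤ K/c * Real.exp (-(h*c)) * (Real.exp (-(((j:ℝ)+1)*h*c)) * (h*c*Real.exp (h*c))) := by
          apply mul_le_mul_of_nonneg_left (mul_le_mul_of_nonneg_left e2 hp.le) (by positivity)
      _ = h*K*Real.exp (-(((j:ℝ)+1)*h*c)) * (Real.exp (-(h*c)) * Real.exp (h*c)) * (c / c) := by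
          ring
      _ = a j := by rw [hfact, div_self (ne_of_gt hc)]; ring
  have hsum2 : ∑ j ∈ Finset.range N, (a j)^2 ≤ h*K^2/(2*c) := by
    have tele : ∑ j ∈ Finset.range N, (Real.exp (-(2*(j:ℝ)*h*c)) - Real.exp (-(2*((j:ℝ)+1)*h*c)))
        = 1 - Real.exp (-(2*(N:ℝ)*h*c)) := by
      have := Finset.sum_range_sub' (fun j => Real.exp (-(2*(j:ℝ)*h*c))) N
      simpa using this
    have hbd : ∑ j ∈ Finset.range N, (a j)^2
        ≤ ∑ j ∈ Finset.range N, (h*K^2/(2*c)) * (Real.exp (-(2*(j:ℝ)*h*c)) - Real.exp (-(2*((j:ℝ)+1)*h*c))) := by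
      apply Finset.sum_le_sum
      intro j _
      have e1 : Real.exp (-(2*(j:ℝ)*h*c)) - Real.exp (-(2*((j:ℝ)+1)*h*c))
          = Real.exp (-(2*((j:ℝ)+1)*h*c)) * (Real.exp (2*(h*c)) - 1) := by
        rw [mul_sub, ← Real.exp_add]; ring_nf
      have e2 : 2*(h*c) ≤ Real.exp (2*(h*c)) - 1 := by
        have := Real.add_one_le_exp (2*(h*c)); linarith
      have asq : (a j)^2 = h^2*K^2*(Real.exp (-(2*((j:ℝ)+1)*h*c))) := by
        calc (a j)^2 = h^2*K^2*(Real.exp (-(((j:ℝ)+1)*h*c)) * Real.exp (-(((j:ℝ)+1)*h*c))) := by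
              rw [ha]; ring
          _ = h^2*K^2*(Real.exp (-(2*((j:ℝ)+1)*h*c))) := by
              rw [← Real.exp_add]; congr 1; ring
      rw [asq, e1]
      have hp := Real.exp_pos (-(2*((j:ℝ)+1)*h*c))
      calc h^2*K^2*(Real.exp (-(2*((j:ℝ)+1)*h*c)))
          = (h*K^2/(2*c)) * (Real.exp (-(2*((j:ℝ)+1)*h*c)) * (2*(h*c))) := by
              field_simp
        _ ≤ (h*K^2/(2*c)) * (Real.exp (-(2*((j:ℝ)+1)*h*c)) * (Real.exp (2*(h*c)) - 1)) := by
              apply mul_le_mul_of_nonneg_left (mul_le_mul_of_nonneg_left e2 hp.le) (by positivity)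
    rw [← Finset.mul_sum, tele] at hbd
    have hE := Real.exp_pos (-(2*(N:ℝ)*h*c))
    have hcoef : (0:ℝ) ≤ h*K^2/(2*c) := by positivity
    nlinarith [hbd, mul_nonneg hcoef hE.le]
  linarith [hsum1, hsum2]



open MeasureTheory

/-- Suppose a nonnegative integer-valued random variable `X` with mean
`m > 0` admits a coupling `(X, Xs)` with its size-bias transform
(`P(Xs = k) = k P(X = k) / m`) that is `(c, q)`-bounded for the lower tail, i.e.
`P(Xs ≤ X + c | X = k) ≥ q` for every `k`.  Then `P(X = 0) ≤ exp(−q m / c)`. -/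
theorem stmt16 {Ω : Type*} [MeasurableSpace Ω] (μ : Measure Ω) [IsProbabilityMeasure μ]
    (X Xs : Ω → ℕ) (hmX : Measurable X) (hmXs : Measurable Xs)
    (hint : Integrable (fun ω => (X ω : ℝ)) μ)
    (m : ℝ) (hm : m = ∫ ω, (X ω : ℝ) ∂μ) (hmpos : 0 < m)
    (c q : ℝ) (hc : 0 < c) (hq0 : 0 < q) (hq1 : q ≤ 1)
    (hsb : ∀ k : ℕ, μ {ω | Xs ω = k} * ENNReal.ofReal m
        = (k : ENNReal) * μ {ω | X ω = k})
    (hcoupling : ∀ k : ℕ, ENNReal.ofReal q * μ {ω | X ω = k}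
        ≤ μ {ω | X ω = k ∧ (Xs ω : ℝ) ≤ (X ω : ℝ) + c}) :
    μ {ω | X ω = 0} ≤ ENNReal.ofReal (Real.exp (-(q * m) / c)) := by
  classical
  set A : ℝ → ENNReal := fun θ => ∑' k : ℕ, ENNReal.ofReal (Real.exp (-(θ * k))) * μ {ω | X ω = k} with hA
  set B : ℝ → ENNReal := fun θ => ∑' k : ℕ, ENNReal.ofReal (Real.exp (-(θ * k))) * μ {ω | Xs ω = k} with hB
  have hmeasX : ∀ k : ℕ, MeasurableSet {ω | X ω = k} := fun k => hmX (measurableSet_singleton k)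
  have hdisjX : Pairwise (Function.onFun Disjoint (fun k => {ω | X ω = k})) := by
    intro i j hij
    refine Set.disjoint_left.mpr fun ω hi hj => hij ?_
    simp only [Set.mem_setOf_eq] at hi hj
    rw [← hi, hj]
  have hunivX : (⋃ k : ℕ, {ω | X ω = k}) = Set.univ := by
    ext ω; simp
  have hA0 : A 0 = 1 := by
    rw [hA]
    simp only [zero_mul, neg_zero, Real.exp_zero, ENNReal.ofReal_one, one_mul]
    rw [← measure_iUnion hdisjX hmeasX, hunivX, measure_univ]
  have hAlb : ∀ θ : ℝ, μ {ω | X ω = 0} ≤ A θ := by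
    intro θ
    have := ENNReal.le_tsum (f := fun k : ℕ => ENNReal.ofReal (Real.exp (-(θ * k))) * μ {ω | X ω = k}) 0
    simpa using this
  have hSB : ∀ θ : ℝ, ENNReal.ofReal m * B θ
      = ∑' k : ℕ, (k : ENNReal) * (ENNReal.ofReal (Real.exp (-(θ * k))) * μ {ω | X ω = k}) := by
    intro θ
    rw [hB, ← ENNReal.tsum_mul_left]
    refine tsum_congr fun k => ?_
    calc ENNReal.ofReal m * (ENNReal.ofReal (Real.exp (-(θ * k))) * μ {ω | Xs ω = k})
        = ENNReal.ofReal (Real.exp (-(θ * k))) * (μ {ω | Xs ω = k} * ENNReal.ofReal m) := by ring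
      _ = ENNReal.ofReal (Real.exp (-(θ * k))) * ((k : ENNReal) * μ {ω | X ω = k}) := by rw [hsb k]
      _ = (k : ENNReal) * (ENNReal.ofReal (Real.exp (-(θ * k))) * μ {ω | X ω = k}) := by ring
  -- coupling inequality
  have hCoup : ∀ θ : ℝ, 0 ≤ θ → ENNReal.ofReal (q * Real.exp (-(θ * c))) * A θ ≤ B θ := by
    intro θ hθ
    set S : ℕ → ℕ → Set Ω := fun k j => {ω | X ω = k ∧ Xs ω = j} with hS
    have hmeasS : ∀ k j, MeasurableSet (S k j) := fun k j =>
      (hmX (measurableSet_singleton k)).inter (hmXs (measurableSet_singleton j))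
    set T : ℕ → ℕ → Set Ω := fun k j => {ω | X ω = k ∧ Xs ω = j ∧ ((j:ℝ) ≤ (k:ℝ) + c)} with hT
    have hTS : ∀ k j, T k j = if ((j:ℝ) ≤ (k:ℝ) + c) then S k j else ∅ := by
      intro k j
      by_cases hj : ((j:ℝ) ≤ (k:ℝ) + c)
      · simp [hT, hS, hj, Set.ext_iff, and_assoc]
      · simp [hT, hS, hj, Set.ext_iff]
    -- decomposition of {Xs = j} over values of X
    have hXs_dec : ∀ j : ℕ, μ {ω | Xs ω = j} = ∑' k : ℕ, μ (S k j) := by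
      intro j
      have hu : {ω | Xs ω = j} = ⋃ k : ℕ, S k j := by
        ext ω; simp [hS]
      rw [hu, measure_iUnion ?_ (fun k => hmeasS k j)]
      intro i l hil
      refine Set.disjoint_left.mpr fun ω hi hl => hil ?_
      simp only [hS, Set.mem_setOf_eq] at hi hl
      rw [← hi.1, hl.1]
    -- decomposition of the coupling event
    have hE_dec : ∀ k : ℕ, μ {ω | X ω = k ∧ (Xs ω : ℝ) ≤ (X ω : ℝ) + c}
        = ∑' j : ℕ, μ (T k j) := by
      intro k
      have hu : {ω | X ω = k ∧ (Xs ω : ℝ) ≤ (X ω : ℝ) + c} = ⋃ j : ℕ, T k j := by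
        ext ω
        simp only [hT, Set.mem_setOf_eq, Set.mem_iUnion]
        constructor
        · rintro ⟨h1, h2⟩
          exact ⟨Xs ω, h1, rfl, by rw [h1] at h2; exact_mod_cast h2⟩
        · rintro ⟨j, h1, h2, h3⟩
          refine ⟨h1, ?_⟩
          rw [h1, h2]; exact_mod_cast h3
      rw [hu, measure_iUnion ?_ ?_]
      · intro i l hil
        refine Set.disjoint_left.mpr fun ω hi hl => hil ?_
        simp only [hT, Set.mem_setOf_eq] at hi hl
        rw [← hi.2.1, hl.2.1]
      · intro j
        rw [hTS]
        split
        · exact hmeasS k j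
        · exact MeasurableSet.empty
    calc ENNReal.ofReal (q * Real.exp (-(θ * c))) * A θ
        = ∑' k : ℕ, ENNReal.ofReal (Real.exp (-(θ * ((k:ℝ) + c)))) * (ENNReal.ofReal q * μ {ω | X ω = k}) := by
          rw [hA, ← ENNReal.tsum_mul_left]
          refine tsum_congr fun k => ?_
          have hre : q * Real.exp (-(θ*c)) * Real.exp (-(θ*(k:ℝ))) = Real.exp (-(θ*((k:ℝ)+c))) * q := by
            rw [mul_assoc, ← Real.exp_add]
            rw [show -(θ*c) + -(θ*(k:ℝ)) = -(θ*((k:ℝ)+c)) by ring]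
            ring
          rw [← mul_assoc, ← mul_assoc, ← ENNReal.ofReal_mul (by positivity),
            ← ENNReal.ofReal_mul (by positivity), hre]
      _ ≤ ∑' k : ℕ, ENNReal.ofReal (Real.exp (-(θ * ((k:ℝ) + c)))) * μ {ω | X ω = k ∧ (Xs ω : ℝ) ≤ (X ω : ℝ) + c} := by
          exact ENNReal.tsum_le_tsum fun k => mul_le_mul_right (hcoupling k) _
      _ = ∑' k : ℕ, ∑' j : ℕ, ENNReal.ofReal (Real.exp (-(θ * ((k:ℝ) + c)))) * μ (T k j) := by
          refine tsum_congr fun k => ?_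
          rw [hE_dec k, ENNReal.tsum_mul_left]
      _ ≤ ∑' k : ℕ, ∑' j : ℕ, ENNReal.ofReal (Real.exp (-(θ * j))) * μ (S k j) := by
          refine ENNReal.tsum_le_tsum fun k => ENNReal.tsum_le_tsum fun j => ?_
          rw [hTS]
          split
          · rename_i hj
            refine mul_le_mul_left (ENNReal.ofReal_le_ofReal (Real.exp_le_exp.mpr ?_)) _
            have : θ * (j:ℝ) ≤ θ * ((k:ℝ) + c) := mul_le_mul_of_nonneg_left hj hθ
            linarith
          · simp
      _ = ∑' j : ℕ, ∑' k : ℕ, ENNReal.ofReal (Real.exp (-(θ * j))) * μ (S k j) := ENNReal.tsum_comm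
      _ = B θ := by
          rw [hB]
          refine tsum_congr fun j => ?_
          rw [ENNReal.tsum_mul_left, ← hXs_dec j]
  -- step inequality
  have hmono : ∀ θ h' : ℝ, 0 < h' →
      A (θ + h') + ENNReal.ofReal h' * ∑' k : ℕ, (k : ENNReal) * (ENNReal.ofReal (Real.exp (-((θ + h') * k))) * μ {ω | X ω = k}) ≤ A θ := by
    intro θ h' hh'
    rw [hA, ← ENNReal.tsum_mul_left, ← ENNReal.tsum_add]
    refine ENNReal.tsum_le_tsum fun k => ?_
    have hre : Real.exp (-((θ+h')*(k:ℝ))) + h'*(k:ℝ)*Real.exp (-((θ+h')*(k:ℝ))) ≤ Real.exp (-(θ*(k:ℝ))) := by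
      have h1 : 1 + h'*(k:ℝ) ≤ Real.exp (h'*(k:ℝ)) := by linarith [Real.add_one_le_exp (h'*(k:ℝ))]
      have h2 : Real.exp (-((θ+h')*(k:ℝ))) * Real.exp (h'*(k:ℝ)) = Real.exp (-(θ*(k:ℝ))) := by
        rw [← Real.exp_add]; congr 1; ring
      nlinarith [Real.exp_pos (-((θ+h')*(k:ℝ)))]
    have hk : (k : ENNReal) = ENNReal.ofReal (k:ℝ) := (ENNReal.ofReal_natCast k).symm
    rw [hk, ← mul_assoc, ← mul_assoc, ← ENNReal.ofReal_mul hh'.le,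
      ← ENNReal.ofReal_mul (by positivity), ← add_mul,
      ← ENNReal.ofReal_add (by positivity) (by positivity)]
    exact mul_le_mul_left (ENNReal.ofReal_le_ofReal hre) _
  have hStep : ∀ θ h' : ℝ, 0 ≤ θ → 0 < h' →
      A (θ + h') * ENNReal.ofReal (1 + h'*q*m*Real.exp (-((θ+h')*c))) ≤ A θ := by
    intro θ h' hθ hh'
    have hd : (0:ℝ) ≤ h'*q*m*Real.exp (-((θ+h')*c)) := by positivity
    rw [ENNReal.ofReal_add (by norm_num) hd, ENNReal.ofReal_one, mul_add, mul_one]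
    have hsplit : ENNReal.ofReal (h'*q*m*Real.exp (-((θ+h')*c)))
        = ENNReal.ofReal h' * ENNReal.ofReal m * ENNReal.ofReal (q * Real.exp (-((θ+h')*c))) := by
      rw [← ENNReal.ofReal_mul (by positivity), ← ENNReal.ofReal_mul (by positivity)]
      congr 1; ring
    have h1 : A (θ+h') * ENNReal.ofReal (h'*q*m*Real.exp (-((θ+h')*c)))
        ≤ ENNReal.ofReal h' * (ENNReal.ofReal m * B (θ+h')) := by
      calc A (θ+h') * ENNReal.ofReal (h'*q*m*Real.exp (-((θ+h')*c)))
          = ENNReal.ofReal h' * ENNReal.ofReal m * (ENNReal.ofReal (q * Real.exp (-((θ+h')*c))) * A (θ+h')) := by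
            rw [hsplit]; ring
        _ ≤ ENNReal.ofReal h' * ENNReal.ofReal m * B (θ+h') :=
            mul_le_mul_right (hCoup (θ+h') (by positivity)) _
        _ = ENNReal.ofReal h' * (ENNReal.ofReal m * B (θ+h')) := by rw [mul_assoc]
    calc A (θ+h') + A (θ+h') * ENNReal.ofReal (h'*q*m*Real.exp (-((θ+h')*c)))
        ≤ A (θ+h') + ENNReal.ofReal h' * (ENNReal.ofReal m * B (θ+h')) := add_le_add le_rfl h1
      _ = A (θ+h') + ENNReal.ofReal h' * ∑' k : ℕ, (k : ENNReal) * (ENNReal.ofReal (Real.exp (-((θ + h') * k))) * μ {ω | X ω = k}) := by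
          rw [hSB (θ+h')]
      _ ≤ A θ := hmono θ h' hh'
  -- iteration
  have hiter : ∀ h' : ℝ, 0 < h' → ∀ n : ℕ,
      A ((n:ℝ) * h') * ∏ j ∈ Finset.range n, ENNReal.ofReal (1 + h'*q*m*Real.exp (-(((j:ℝ)+1) * h' * c))) ≤ 1 := by
    intro h' hh' n
    induction n with
    | zero => simp [hA0]
    | succ n ih =>
      rw [Finset.prod_range_succ]
      have hcast : ((n+1 : ℕ):ℝ) * h' = (n:ℝ)*h' + h' := by push_cast; ring
      have hcast2 : -(((n:ℝ)+1) * h' * c) = -(((n:ℝ)*h' + h')*c) := by ring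
      rw [hcast, hcast2]
      calc A ((n:ℝ)*h' + h') * ((∏ j ∈ Finset.range n, ENNReal.ofReal (1 + h'*q*m*Real.exp (-(((j:ℝ)+1) * h' * c)))) * ENNReal.ofReal (1 + h'*q*m*Real.exp (-(((n:ℝ)*h' + h')*c))))
          = (A ((n:ℝ)*h' + h') * ENNReal.ofReal (1 + h'*q*m*Real.exp (-(((n:ℝ)*h' + h')*c)))) * ∏ j ∈ Finset.range n, ENNReal.ofReal (1 + h'*q*m*Real.exp (-(((j:ℝ)+1) * h' * c))) := by
            ring
        _ ≤ A ((n:ℝ)*h') * ∏ j ∈ Finset.range n, ENNReal.ofReal (1 + h'*q*m*Real.exp (-(((j:ℝ)+1) * h' * c))) :=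
            mul_le_mul_left (hStep ((n:ℝ)*h') h' (by positivity) hh') _
        _ ≤ 1 := ih
  -- bound via real product
  have hbound : ∀ h' : ℝ, 0 < h' → ∀ N : ℕ,
      μ {ω | X ω = 0} ≤ ENNReal.ofReal ((∏ j ∈ Finset.range N, (1 + h'*(q*m)*Real.exp (-(((j:ℝ)+1)*h'*c))))⁻¹) := by
    intro h' hh' N
    have hppos : (0:ℝ) < ∏ j ∈ Finset.range N, (1 + h'*(q*m)*Real.exp (-(((j:ℝ)+1)*h'*c))) :=
      Finset.prod_pos fun j _ => by positivity
    rw [ENNReal.ofReal_inv_of_pos hppos]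
    rw [ENNReal.le_inv_iff_mul_le]
    have hprodeq : ∏ j ∈ Finset.range N, (1 + h'*(q*m)*Real.exp (-(((j:ℝ)+1)*h'*c)))
        = ∏ j ∈ Finset.range N, (1 + h'*q*m*Real.exp (-(((j:ℝ)+1)*h'*c))) := by
      refine Finset.prod_congr rfl fun j _ => by ring
    rw [hprodeq, ENNReal.ofReal_prod_of_nonneg (fun j _ => by positivity)]
    exact le_trans (mul_le_mul_left (hAlb ((N:ℝ)*h')) _) (hiter h' hh' N)
  -- combine with the analytic product lower bound
  have hfin : ∀ n : ℕ, μ {ω | X ω = 0} ≤ ENNReal.ofReal (Real.exp (-(((q*m)/c) * Real.exp (-((1/((n:ℝ)+1))*c)) * (1 - Real.exp (-(((n:ℝ)+1)*c))) - (1/((n:ℝ)+1))*(q*m)^2/(2*c)))) := by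
    intro n
    have hh' : (0:ℝ) < 1/((n:ℝ)+1) := by positivity
    have hqm : (0:ℝ) ≤ q*m := by positivity
    have hprod := stmt16_prod_ge (q*m) c (1/((n:ℝ)+1)) hqm hc hh' ((n+1)^2)
    have hNh : (((n+1)^2 : ℕ):ℝ) * (1/((n:ℝ)+1)) * c = ((n:ℝ)+1)*c := by
      push_cast
      field_simp
    rw [hNh] at hprod
    refine le_trans (hbound (1/((n:ℝ)+1)) hh' ((n+1)^2)) (ENNReal.ofReal_le_ofReal ?_)
    rw [Real.exp_neg]
    exact inv_anti₀ (Real.exp_pos _) hprod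
  -- limit
  have t0 : Tendsto (fun n : ℕ => 1/((n:ℝ)+1)) atTop (nhds 0) := tendsto_one_div_add_atTop_nhds_zero_nat
  have t1 : Tendsto (fun n : ℕ => Real.exp (-((1/((n:ℝ)+1))*c))) atTop (nhds 1) := by
    have := ((t0.mul_const c).neg)
    have h2 := (Real.continuous_exp.tendsto (-(0*c))).comp this
    simpa [Function.comp_def] using h2
  have t2 : Tendsto (fun n : ℕ => Real.exp (-(((n:ℝ)+1)*c))) atTop (nhds 0) := by
    have ha : Tendsto (fun n : ℕ => ((n:ℝ)+1)*c) atTop atTop := by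
      apply Tendsto.atTop_mul_const hc
      exact tendsto_atTop_add_const_right _ 1 tendsto_natCast_atTop_atTop
    exact Real.tendsto_exp_atBot.comp (tendsto_neg_atTop_atBot.comp ha)
  have tg : Tendsto (fun n : ℕ => Real.exp (-(((q*m)/c) * Real.exp (-((1/((n:ℝ)+1))*c)) * (1 - Real.exp (-(((n:ℝ)+1)*c))) - (1/((n:ℝ)+1))*(q*m)^2/(2*c))))
      atTop (nhds (Real.exp (-(q*m)/c))) := by
    have harg : Tendsto (fun n : ℕ => -(((q*m)/c) * Real.exp (-((1/((n:ℝ)+1))*c)) * (1 - Real.exp (-(((n:ℝ)+1)*c))) - (1/((n:ℝ)+1))*(q*m)^2/(2*c)))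
        atTop (nhds (-((q*m)/c * 1 * (1 - 0) - 0*(q*m)^2/(2*c)))) := by
      apply Tendsto.neg
      apply Tendsto.sub
      · exact (tendsto_const_nhds.mul t1).mul (tendsto_const_nhds.sub t2)
      · exact ((t0.mul_const ((q*m)^2)).div_const (2*c))
    have : -((q*m)/c * 1 * (1 - 0) - 0*(q*m)^2/(2*c)) = -(q*m)/c := by ring
    rw [this] at harg
    exact (Real.continuous_exp.tendsto _).comp harg
  have tofReal : Tendsto (fun n : ℕ => ENNReal.ofReal (Real.exp (-(((q*m)/c) * Real.exp (-((1/((n:ℝ)+1))*c)) * (1 - Real.exp (-(((n:ℝ)+1)*c))) - (1/((n:ℝ)+1))*(q*m)^2/(2*c)))))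
      atTop (nhds (ENNReal.ofReal (Real.exp (-(q*m)/c)))) :=
    (ENNReal.continuous_ofReal.tendsto _).comp tg
  exact ge_of_tendsto' tofReal hfin
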